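/- arXiv:1210.8387 — 3 statements merged into one kernel-verified Lean document; each statement's English description precedes it below -/
import Mathlib

section
/- Let $k$ be a field of characteristic $p > 0$ and let $a \neq b$ be elements of $k$. In the field $R = k(t)$ of rational functions, there is no $f \in k(t)$ such that $\frac{1}{t-a} - \frac{1}{t-b} = f^p - f$. -/
open Polynomial IsDedekindDomain Multiplicative

/-- The height-one prime `(X - C a)` of `k[X]`. -/
noncomputable def primeAt {k : Type*} [Field k] (a : k) :
    IsDedekindDomain.HeightOneSpectrum (Polynomial k) where
  asIdeal := Ideal.span {X - C a}
  isPrime := (Ideal.span_singleton_prime (X_sub_C_ne_zero a)).mpr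
    (Polynomial.irreducible_X_sub_C a).prime
  ne_bot := by
    simp [Ideal.span_singleton_eq_bot, X_sub_C_ne_zero a]

lemma valuation_X_sub_C_self {k : Type*} [Field k] (a : k) :
    (primeAt a).valuation (RatFunc k) (RatFunc.X - RatFunc.C a : RatFunc k)
      = Multiplicative.ofAdd (-1 : ℤ) := by
  have : (RatFunc.X - RatFunc.C a : RatFunc k)
      = algebraMap (Polynomial k) (RatFunc k) (X - C a) := by
    simp [RatFunc.algebraMap_X, RatFunc.algebraMap_C]
  rw [this, IsDedekindDomain.HeightOneSpectrum.valuation_of_algebraMap]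
  exact (primeAt a).intValuation_singleton (X_sub_C_ne_zero a) rfl

lemma valuation_X_sub_C_other {k : Type*} [Field k] {a b : k} (hab : a ≠ b) :
    (primeAt a).valuation (RatFunc k) (RatFunc.X - RatFunc.C b : RatFunc k) = 1 := by
  have h1 : (RatFunc.X - RatFunc.C b : RatFunc k)
      = algebraMap (Polynomial k) (RatFunc k) (X - C b) := by
    simp [RatFunc.algebraMap_X, RatFunc.algebraMap_C]
  rw [h1, IsDedekindDomain.HeightOneSpectrum.valuation_of_algebraMap]
  have hle := (primeAt a).intValuation_le_one (X - C b)
  have hnlt : ¬ (primeAt a).intValuation (X - C b) < 1 := by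
    rw [IsDedekindDomain.HeightOneSpectrum.intValuation_lt_one_iff_dvd]
    rw [show (primeAt a).asIdeal = Ideal.span {X - C a} from rfl,
      span_singleton_dvd_span_singleton_iff_dvd]
    intro hdvd
    have heq : X - C a = X - C b :=
      Polynomial.eq_of_monic_of_associated (monic_X_sub_C a) (monic_X_sub_C b)
        ((Polynomial.irreducible_X_sub_C a).associated_of_dvd
          (Polynomial.irreducible_X_sub_C b) hdvd)
    exact hab (by
      have h0 := congrArg (fun q : Polynomial k => q.coeff 0) heq
      simpa using h0)
  exact le_antisymm hle (not_lt.mp hnlt)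

/-- Let `k` be a field of characteristic `p > 0` and `a ≠ b` in `k`. In the
field `k(t)` of rational functions there is no `f` with `1/(t-a) - 1/(t-b) = f^p - f`. -/
theorem no_artinSchreier_solution_ratFunc (k : Type*) [Field k] (p : ℕ) (hp : p.Prime)
    [CharP k p] (a b : k) (hab : a ≠ b) :
    ¬∃ f : RatFunc k,
      (RatFunc.X - RatFunc.C a)⁻¹ - (RatFunc.X - RatFunc.C b)⁻¹ = f ^ p - f := by
  rintro ⟨f, hf⟩
  set v := (primeAt a).valuation (K := RatFunc k) with hv
  have hone : (1 : WithZero (Multiplicative ℤ)) < ((Multiplicative.ofAdd (1 : ℤ) : Multiplicative ℤ) : WithZero (Multiplicative ℤ)) := by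
    rw [← WithZero.coe_one, WithZero.coe_lt_coe]
    exact Multiplicative.ofAdd_lt.mpr one_pos
  have hL : v ((RatFunc.X - RatFunc.C a)⁻¹ - (RatFunc.X - RatFunc.C b)⁻¹)
      = Multiplicative.ofAdd (1 : ℤ) := by
    have h1 : v (RatFunc.X - RatFunc.C a)⁻¹ = Multiplicative.ofAdd (1 : ℤ) := by
      rw [Valuation.map_inv, valuation_X_sub_C_self]
      rfl
    have h2 : v (RatFunc.X - RatFunc.C b)⁻¹ = 1 := by
      rw [Valuation.map_inv, valuation_X_sub_C_other hab, inv_one]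
    rw [Valuation.map_sub_eq_of_lt_left, h1]
    rw [h1, h2]
    exact hone
  rw [hf] at hL
  rcases le_or_gt (v f) 1 with hle | hgt
  · have : v (f ^ p - f) ≤ 1 := by
      calc v (f ^ p - f) ≤ max (v (f ^ p)) (v f) := Valuation.map_sub v _ _
        _ ≤ 1 := max_le (by rw [Valuation.map_pow]; exact pow_le_one' hle p) hle
    rw [hL] at this
    exact absurd this (not_le.mpr hone)
  · have hfne : v f ≠ 0 := ne_of_gt (lt_trans zero_lt_one hgt)
    obtain ⟨m, hm⟩ := WithZero.ne_zero_iff_exists.mp hfne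
    set n : ℤ := Multiplicative.toAdd m with hn'
    have hmn : m = Multiplicative.ofAdd n := rfl
    have hn : 0 < n := by
      rw [← hm] at hgt
      have h1m : (1 : Multiplicative ℤ) < m := WithZero.one_lt_coe.mp hgt
      have := Multiplicative.toAdd_lt.mpr h1m
      simpa [hn'] using this
    have hlt : v f < v (f ^ p) := by
      rw [Valuation.map_pow]
      calc v f = v f * 1 := (mul_one _).symm
        _ < v f * v f := by
            exact mul_lt_mul_of_pos_left hgt (zero_lt_iff.mpr hfne)
        _ = v f ^ 2 := (pow_two _).symm
        _ ≤ v f ^ p := pow_le_pow_right' (le_of_lt hgt) hp.two_le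
    have hvv : v (f ^ p - f) = v (f ^ p) := Valuation.map_sub_eq_of_lt_left v hlt
    rw [hL, Valuation.map_pow, ← hm, ← WithZero.coe_pow] at hvv
    have hco : (Multiplicative.ofAdd (1 : ℤ)) = m ^ p := WithZero.coe_inj.mp hvv
    have h1 : (1 : ℤ) = p * n := by
      have := congrArg Multiplicative.toAdd hco
      simpa [hn', mul_comm] using this
    have h2 : (2 : ℤ) ≤ p := by exact_mod_cast hp.two_le
    nlinarith
end

section
/- Let $(R, \mathfrak{m})$ be a regular local ring of characteristic $p > 0$ with regular system of parameters $x_1, \dots, x_d$, $d \geq 1$. If $r \in R$ satisfies $r^p \in (x_1^{np}, \dots, x_{i-1}^{np}, x_i^p, x_{i+1}^{np}, \dots, x_d^{np})$ for every $1 \le i \le d$ (where $n \geq 2$), then $r \in (x_1 \cdots x_d, x_1^n, \dots, x_d^n)$. -/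
open Ideal RingTheory.Sequence IsLocalRing

namespace FrobeniusAux

variable {R : Type*} [CommRing R]

/-- `w` is a nonzerodivisor modulo `I`, elementwise. -/
def WReg (I : Ideal R) (w : R) : Prop := ∀ c : R, w * c ∈ I → c ∈ I

lemma WReg.pow {I : Ideal R} {w : R} (h : WReg I w) : ∀ t : ℕ, WReg I (w ^ t)
  | 0 => fun c hc => by simpa using hc
  | (t+1) => fun c hc => WReg.pow h t c <| h _ <| by
      rwa [show w * (w ^ t * c) = w ^ (t+1) * c by ring]

lemma WReg.raise {I : Ideal R} {w y : R} (hw : WReg I w)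
    (h1 : WReg (I ⊔ span {w}) y) : ∀ {a : ℕ}, 1 ≤ a → WReg (I ⊔ span {w ^ a}) y := by
  intro a ha
  induction a, ha using Nat.le_induction with
  | base => simpa using h1
  | succ a ha ih =>
    intro c hc
    have hc1 : y * c ∈ I ⊔ span {w} := by
      refine sup_le_sup_left ?_ I hc
      rw [span_le, Set.singleton_subset_iff]
      exact mem_span_singleton.mpr ⟨w ^ a, by ring⟩
    obtain ⟨z, hz, t, ht, hzt⟩ := Submodule.mem_sup.mp (h1 c hc1)
    obtain ⟨c₁, rfl⟩ := mem_span_singleton'.mp ht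
    -- c = z + c₁ * w
    have h2 : y * (c₁ * w) ∈ I ⊔ span {w ^ (a+1)} := by
      have : y * (c₁ * w) = y * c - y * z := by rw [← hzt]; ring
      rw [this]
      exact Submodule.sub_mem _ hc (Submodule.mem_sup_left (Ideal.mul_mem_left _ _ hz))
    obtain ⟨z', hz', t', ht', hzt'⟩ := Submodule.mem_sup.mp h2
    obtain ⟨v, rfl⟩ := mem_span_singleton'.mp ht'
    have h3 : w * (y * c₁ - v * w ^ a) ∈ I := by
      have : w * (y * c₁ - v * w ^ a) = y * (c₁ * w) - v * w ^ (a+1) := by ring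
      rw [this, ← hzt']; simpa using hz'
    have h4 : y * c₁ ∈ I ⊔ span {w ^ a} := by
      have heq : y * c₁ = (y * c₁ - v * w ^ a) + v * w ^ a := by ring
      rw [heq]
      exact Submodule.add_mem _ (Submodule.mem_sup_left (hw _ h3))
        (Submodule.mem_sup_right (mem_span_singleton'.mpr ⟨v, rfl⟩))
    have h5 := ih c₁ h4
    obtain ⟨z₂, hz₂, t₂, ht₂, hzt₂⟩ := Submodule.mem_sup.mp h5
    obtain ⟨u₂, rfl⟩ := mem_span_singleton'.mp ht₂
    have : c = (z + z₂ * w) + u₂ * w ^ (a+1) := by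
      rw [← hzt]
      have : c₁ = z₂ + u₂ * w ^ a := hzt₂.symm
      rw [this]; ring
    rw [this]
    refine Submodule.add_mem _ (Submodule.mem_sup_left ?_)
      (Submodule.mem_sup_right (mem_span_singleton'.mpr ⟨u₂, rfl⟩))
    exact Ideal.add_mem _ hz (Ideal.mul_mem_right _ _ hz₂)


variable [IsNoetherianRing R] [IsLocalRing R]
variable {d : ℕ} {x : Fin d → R}

lemma nodup_wreg (hreg : IsRegular R (List.ofFn x))
    (l : List (Fin d)) (hl : l.Nodup) : IsWeaklyRegular R (l.map x) := by
  classical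
  set rest := (Finset.univ \ l.toFinset).toList with hrest
  have hnd : (l ++ rest).Nodup := by
    refine List.Nodup.append hl (Finset.nodup_toList _) ?_
    intro a ha hb
    have h' := Finset.mem_toList.mp hb
    rw [Finset.mem_sdiff] at h'
    exact h'.2 (List.mem_toFinset.mpr ha)
  have hperm : (l ++ rest).Perm (List.finRange d) := by
    refine List.perm_of_nodup_nodup_toFinset_eq hnd (List.nodup_finRange d) ?_
    ext j
    simp [rest, List.mem_toFinset]
  have h2 : (List.ofFn x).Perm ((l ++ rest).map x) := by
    rw [List.ofFn_eq_map]
    exact ((hperm.map x).symm)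
  have h3 : IsWeaklyRegular R ((l ++ rest).map x) := by
    refine IsLocalRing.isWeaklyRegular_of_perm_of_subset_maximalIdeal
      hreg.toIsWeaklyRegular h2 ?_
    intro r hr
    obtain ⟨j, rfl⟩ := List.mem_ofFn.mp hr
    have hof : Ideal.ofList (List.ofFn x) = span (Set.range x) :=
      congrArg span (Set.ext fun r => List.mem_ofFn)
    exact IsLocalRing.le_maximalIdeal
      (fun htop => hreg.top_ne_smul (by rw [hof, htop, smul_eq_mul, mul_top]))
      (subset_span (Set.mem_range_self j))
  rw [List.map_append] at h3
  exact ((isWeaklyRegular_append_iff _ _ _).mp h3).1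

lemma base_nzd (hreg : IsRegular R (List.ofFn x))
    (S : Finset (Fin d)) {i : Fin d} (hi : i ∉ S) :
    WReg (span (x '' ↑S)) (x i) := by
  classical
  have hl : (S.toList ++ [i]).Nodup := by
    refine List.Nodup.append (Finset.nodup_toList S) (List.nodup_singleton i) ?_
    intro a ha hb
    rw [List.mem_singleton] at hb; subst hb
    exact hi (Finset.mem_toList.mp ha)
  have h1 := nodup_wreg hreg _ hl
  rw [List.map_append] at h1
  obtain ⟨-, h2⟩ := (isWeaklyRegular_append_iff _ _ _).mp h1
  rw [List.map_singleton, isWeaklyRegular_singleton_iff] at h2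
  have hsm : (Ideal.ofList (S.toList.map x) • ⊤ : Submodule R R) = span (x '' ↑S) := by
    rw [smul_eq_mul, mul_top]
    refine congrArg span (Set.ext fun r => ?_)
    rw [Set.mem_setOf_eq, List.mem_map]
    constructor
    · rintro ⟨j, hj, rfl⟩
      exact ⟨j, Finset.mem_toList.mp hj, rfl⟩
    · rintro ⟨j, hj, rfl⟩
      exact ⟨j, Finset.mem_toList.mpr hj, rfl⟩
  intro c hc
  have hkey : (x i) • (Submodule.Quotient.mk c :
      R ⧸ (Ideal.ofList (S.toList.map x) • ⊤ : Submodule R R)) = (x i) • (Submodule.Quotient.mk (0:R)) := by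
    rw [← Submodule.Quotient.mk_smul, ← Submodule.Quotient.mk_smul, Submodule.Quotient.eq]
    rw [hsm]
    simpa [smul_eq_mul] using hc
  have h6 := h2 hkey
  rw [Submodule.Quotient.eq, hsm] at h6
  simpa using h6


lemma image_insert_split (S : Finset (Fin d)) {k : Fin d} (hk : k ∈ S) (g : Fin d → ℕ) :
    (fun j => x j ^ g j) '' ↑S = insert (x k ^ g k) ((fun j => x j ^ g j) '' ↑(S.erase k)) := by
  conv_lhs => rw [← Finset.insert_erase hk]
  rw [Finset.coe_insert, Set.image_insert_eq]

lemma nzd_one (hreg : IsRegular R (List.ofFn x)) (S : Finset (Fin d)) (f : Fin d → ℕ)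
    (hone : ∀ j ∈ S, f j = 1) {i : Fin d} (hi : i ∉ S) :
    WReg (span ((fun j => x j ^ f j) '' ↑S)) (x i) := by
  have himg : (fun j => x j ^ f j) '' ↑S = x '' ↑S :=
    Set.image_congr (fun j hj => by rw [hone j (Finset.mem_coe.mp hj), pow_one])
  rw [himg]
  exact base_nzd hreg S hi

lemma nzd (hreg : IsRegular R (List.ofFn x)) :
    ∀ (N : ℕ) (S : Finset (Fin d)) (f : Fin d → ℕ),
    (∑ j ∈ S, (f j - 1)) ≤ N → (∀ j ∈ S, 1 ≤ f j) → ∀ i ∉ S,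
    WReg (span ((fun j => x j ^ f j) '' ↑S)) (x i) := by
  intro N
  induction N with
  | zero =>
    intro S f hsum hf i hi
    refine nzd_one hreg S f (fun j hj => ?_) hi
    have h1 := Finset.sum_eq_zero_iff.mp (Nat.le_zero.mp hsum) j hj
    have h2 := hf j hj
    omega
  | succ N ih =>
    intro S f hsum hf i hi
    by_cases h0 : ∑ j ∈ S, (f j - 1) = 0
    · refine nzd_one hreg S f (fun j hj => ?_) hi
      have h1 := Finset.sum_eq_zero_iff.mp h0 j hj
      have h2 := hf j hj
      omega
    · obtain ⟨k, hk, hfk⟩ := Finset.exists_ne_zero_of_sum_ne_zero h0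
      have hfk2 : 2 ≤ f k := by have := hf k hk; omega
      have hadd : (f k - 1) + ∑ j ∈ S.erase k, (f j - 1) = ∑ j ∈ S, (f j - 1) :=
        Finset.add_sum_erase S (fun j => f j - 1) hk
      have hsum_erase : ∑ j ∈ S.erase k, (f j - 1) ≤ N := by omega
      have hw : WReg (span ((fun j => x j ^ f j) '' ↑(S.erase k))) (x k) :=
        ih (S.erase k) f hsum_erase (fun j hj => hf j (Finset.mem_of_mem_erase hj))
          k (Finset.notMem_erase k S)
      classical
      set upd := Function.update f k 1 with hupd
      have hcongr : (fun j => x j ^ upd j) '' ↑(S.erase k)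
          = (fun j => x j ^ f j) '' ↑(S.erase k) :=
        Set.image_congr (fun j hj => by
          rw [hupd, Function.update_of_ne (Finset.ne_of_mem_erase (Finset.mem_coe.mp hj))])
      have hsplit : ∀ (g : Fin d → ℕ),
          span ((fun j => x j ^ g j) '' ↑S)
          = span ((fun j => x j ^ g j) '' ↑(S.erase k)) ⊔ span {x k ^ g k} := by
        intro g
        rw [image_insert_split S hk g, Ideal.span_insert, sup_comm]
      have h1 : WReg (span ((fun j => x j ^ f j) '' ↑(S.erase k)) ⊔ span {x k}) (x i) := by
        have hmeas : ∑ j ∈ S, (upd j - 1) ≤ N := by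
          have hadd2 : (upd k - 1) + ∑ j ∈ S.erase k, (upd j - 1) = ∑ j ∈ S, (upd j - 1) :=
            Finset.add_sum_erase S (fun j => upd j - 1) hk
          rw [← hadd2]
          have e1 : upd k = 1 := Function.update_self k 1 f
          have e2 : ∑ j ∈ S.erase k, (upd j - 1) = ∑ j ∈ S.erase k, (f j - 1) :=
            Finset.sum_congr rfl (fun j hj => by
              rw [hupd, Function.update_of_ne (Finset.ne_of_mem_erase hj)])
          omega
        have hf' : ∀ j ∈ S, 1 ≤ upd j := by
          intro j hj
          by_cases hjk : j = k
          · subst hjk; rw [hupd, Function.update_self]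
          · rw [hupd, Function.update_of_ne hjk]; exact hf j hj
        have := ih S upd hmeas hf' i hi
        rw [hsplit upd, hcongr] at this
        have e1 : upd k = 1 := Function.update_self k 1 f
        rwa [e1, pow_one] at this
      have hres := WReg.raise hw h1 (le_trans one_le_two hfk2)
      rwa [hsplit f]

lemma colon (hreg : IsRegular R (List.ofFn x)) (S : Finset (Fin d)) (f : Fin d → ℕ)
    (hf : ∀ j ∈ S, 1 ≤ f j) {i : Fin d} (hi : i ∉ S) :
    ∀ (t m : ℕ), t ≤ m → ∀ c : R,
      c * x i ^ t ∈ span ((fun j => x j ^ f j) '' ↑S) ⊔ span {x i ^ m} →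
      c ∈ span ((fun j => x j ^ f j) '' ↑S) ⊔ span {x i ^ (m - t)} := by
  intro t
  induction t with
  | zero => intro m _ c hc; simpa using hc
  | succ t ih =>
    intro m htm c hc
    obtain ⟨z, hz, w, hw, hzw⟩ := Submodule.mem_sup.mp hc
    obtain ⟨u, rfl⟩ := mem_span_singleton'.mp hw
    have hm1 : m - 1 + 1 = m := by omega
    have hkey : x i * (c * x i ^ t - u * x i ^ (m-1))
        ∈ span ((fun j => x j ^ f j) '' ↑S) := by
      have e1 : x i ^ (m-1) * x i = x i ^ m := by rw [← pow_succ, hm1]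
      have e2 : x i * (c * x i ^ t - u * x i ^ (m-1))
          = c * (x i ^ t * x i) - u * (x i ^ (m-1) * x i) := by ring
      rw [e2, ← pow_succ, e1]
      have e3 : c * x i ^ (t+1) - u * x i ^ m = z := by rw [← hzw]; ring
      rw [e3]; exact hz
    have hnz : WReg (span ((fun j => x j ^ f j) '' ↑S)) (x i) :=
      nzd hreg (∑ j ∈ S, (f j - 1)) S f le_rfl hf i hi
    have h7 : c * x i ^ t
        ∈ span ((fun j => x j ^ f j) '' ↑S) ⊔ span {x i ^ (m-1)} := by
      have e4 : c * x i ^ t = (c * x i ^ t - u * x i ^ (m-1)) + u * x i ^ (m-1) := by ring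
      rw [e4]
      exact Submodule.add_mem _ (Submodule.mem_sup_left (hnz _ hkey))
        (Submodule.mem_sup_right (mem_span_singleton'.mpr ⟨u, rfl⟩))
    have h8 := ih (m-1) (by omega) c h7
    have e5 : m - 1 - t = m - (t+1) := by omega
    rwa [e5] at h8


omit [IsNoetherianRing R] [IsLocalRing R] in
lemma pow_mem_span_pow (p : ℕ) (hp : p.Prime) [CharP R p] {G : Set R} {s : R}
    (hs : s ∈ span G) : s ^ p ∈ span ((· ^ p) '' G) := by
  haveI := Fact.mk hp
  induction hs using Submodule.span_induction with
  | mem y hy => exact subset_span ⟨y, hy, rfl⟩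
  | zero => rw [zero_pow hp.ne_zero]; exact Submodule.zero_mem _
  | add a b ha hb iha ihb => rw [add_pow_char a b p]; exact Submodule.add_mem _ iha ihb
  | smul r a ha iha => rw [smul_eq_mul, mul_pow]; exact Ideal.mul_mem_left _ _ iha

omit [IsNoetherianRing R] [IsLocalRing R] in
lemma mul_mem_span_image {G : Set R} {c y : R} (hc : c ∈ span G) :
    c * y ∈ span ((· * y) '' G) := by
  induction hc using Submodule.span_induction with
  | mem a ha => exact subset_span ⟨a, ha, rfl⟩
  | zero => rw [zero_mul]; exact Submodule.zero_mem _
  | add a b ha hb iha ihb => rw [add_mul]; exact Submodule.add_mem _ iha ihb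
  | smul r a ha iha => rw [smul_eq_mul, mul_assoc]; exact Ideal.mul_mem_left _ _ iha

omit [IsNoetherianRing R] [IsLocalRing R] in
lemma span_range_split (g : Fin d → R) (K : Fin d) :
    span (Set.range g) = span (g '' {j | j ≠ K}) ⊔ span {g K} := by
  rw [← Set.image_univ]
  have huniv : (Set.univ : Set (Fin d)) = insert K {j | j ≠ K} := by
    ext j; by_cases h : j = K <;> simp [h]
  rw [huniv, Set.image_insert_eq, Ideal.span_insert, sup_comm]

omit [IsNoetherianRing R] [IsLocalRing R] in
lemma coe_erase_univ (K : Fin d) :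
    (↑(Finset.univ.erase K) : Set (Fin d)) = {j | j ≠ K} := by
  ext j; simp

lemma stepG (hreg : IsRegular R (List.ofFn x))
    (hmax : span (Set.range x) = maximalIdeal R)
    (p : ℕ) (hp : p.Prime) [CharP R p] :
    ∀ (k : ℕ), k ≤ d → ∀ (e : Fin d → ℕ), (∀ j, 1 ≤ e j) → ∀ r : R,
    r ^ p ∈ span (Set.range fun j : Fin d => if (j:ℕ) < k then x j ^ (e j * p) else x j) →
    r ∈ span (Set.range fun j : Fin d => if (j:ℕ) < k then x j ^ e j else x j) := by
  intro k
  induction k with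
  | zero =>
    intro _ e he r hr
    simp only [Nat.not_lt_zero, if_false] at hr ⊢
    have hprime : (maximalIdeal R).IsPrime := (maximalIdeal.isMaximal R).isPrime
    have h1 : r ^ p ∈ maximalIdeal R := by rw [← hmax]; exact hr
    have h2 : r ∈ maximalIdeal R := hprime.mem_of_pow_mem p h1
    rw [← hmax] at h2; exact h2
  | succ k IH =>
    intro hk1 e he r hr
    have hkd : k < d := lt_of_lt_of_le (Nat.lt_succ_self k) hk1
    set K : Fin d := ⟨k, hkd⟩ with hKdef
    have hKval : ((K : Fin d) : ℕ) = k := rfl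
    classical
    set f : Fin d → ℕ := fun j => if (j:ℕ) < k then e j * p else 1 with hfdef
    have hf1 : ∀ j ∈ Finset.univ.erase K, 1 ≤ f j := by
      intro j _
      by_cases h1 : (j:ℕ) < k
      · simp only [hfdef, h1, if_true]
        exact Nat.one_le_iff_ne_zero.mpr (Nat.mul_ne_zero (by have := he j; omega) hp.ne_zero)
      · simp only [hfdef, h1, if_false]; exact le_rfl
    -- the "lower" ideal for colon arguments
    set J : Ideal R := span ((fun j => x j ^ f j) '' ↑(Finset.univ.erase K)) with hJdef
    have hsplitA : ∀ a : ℕ,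
        span (Set.range fun j : Fin d => if (j:ℕ) < k + 1 then
            x j ^ ((if (j:ℕ) = k then a else e j) * p) else x j)
        = J ⊔ span {x K ^ (a * p)} := by
      intro a
      rw [span_range_split (fun j : Fin d => if (j:ℕ) < k + 1 then
            x j ^ ((if (j:ℕ) = k then a else e j) * p) else x j) K]
      congr 2
      · rw [coe_erase_univ]
        refine Set.image_congr fun j hj => ?_
        have hjk : (j:ℕ) ≠ k := fun h => hj (Fin.ext h)
        by_cases h1 : (j:ℕ) < k
        · have h2 : (j:ℕ) < k + 1 := by omega
          simp only [hfdef, h1, h2, hjk, if_true, if_false]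
        · have h2 : ¬ (j:ℕ) < k + 1 := by omega
          simp only [hfdef, h1, h2, if_false, pow_one]
      · simp only [hKval, Nat.lt_succ_self k, if_true, if_pos rfl]
    -- inner induction on the exponent a at slot K
    have inner : ∀ a : ℕ, 1 ≤ a → ∀ c : R,
        c ^ p ∈ span (Set.range fun j : Fin d => if (j:ℕ) < k + 1 then
            x j ^ ((if (j:ℕ) = k then a else e j) * p) else x j) →
        c ∈ span (Set.range fun j : Fin d => if (j:ℕ) < k + 1 then
            x j ^ (if (j:ℕ) = k then a else e j) else x j) := by
      intro a ha
      induction a, ha using Nat.le_induction with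
      | base =>
        intro c hc
        have hsub1 : span (Set.range fun j : Fin d => if (j:ℕ) < k + 1 then
              x j ^ ((if (j:ℕ) = k then 1 else e j) * p) else x j)
            ≤ span (Set.range fun j : Fin d => if (j:ℕ) < k then x j ^ (e j * p) else x j) := by
          rw [span_le, Set.range_subset_iff]
          intro j
          by_cases h1 : (j:ℕ) < k
          · have h2 : (j:ℕ) < k + 1 := by omega
            have h3 : (j:ℕ) ≠ k := by omega
            exact subset_span ⟨j, by simp [h1, h2, h3]⟩
          · by_cases h3 : (j:ℕ) = k
            · have h2 : (j:ℕ) < k + 1 := by omega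
              rw [if_pos h2, if_pos h3, one_mul]
              have hx : x j ∈ span (Set.range fun j : Fin d =>
                  if (j:ℕ) < k then x j ^ (e j * p) else x j) :=
                subset_span ⟨j, by simp [h1]⟩
              exact Ideal.pow_mem_of_mem _ hx p hp.pos
            · have h2 : ¬ (j:ℕ) < k + 1 := by omega
              exact subset_span ⟨j, by simp [h1, h2]⟩
        have hcB := IH (le_of_lt hkd) e he c (hsub1 hc)
        have hsub2 : span (Set.range fun j : Fin d => if (j:ℕ) < k then x j ^ e j else x j)
            ≤ span (Set.range fun j : Fin d => if (j:ℕ) < k + 1 then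
              x j ^ (if (j:ℕ) = k then 1 else e j) else x j) := by
          rw [span_le, Set.range_subset_iff]
          intro j
          by_cases h1 : (j:ℕ) < k
          · have h2 : (j:ℕ) < k + 1 := by omega
            have h3 : (j:ℕ) ≠ k := by omega
            exact subset_span ⟨j, by simp [h1, h2, h3]⟩
          · by_cases h3 : (j:ℕ) = k
            · have h2 : (j:ℕ) < k + 1 := by omega
              exact subset_span ⟨j, by simp [h1, h2, h3]⟩
            · have h2 : ¬ (j:ℕ) < k + 1 := by omega
              exact subset_span ⟨j, by simp [h1, h2]⟩
        exact hsub2 hcB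
      | succ a ha iha =>
        intro c hc
        -- first get a representation of c via the outer inductive hypothesis
        have hsub1 : span (Set.range fun j : Fin d => if (j:ℕ) < k + 1 then
              x j ^ ((if (j:ℕ) = k then a + 1 else e j) * p) else x j)
            ≤ span (Set.range fun j : Fin d => if (j:ℕ) < k then x j ^ (e j * p) else x j) := by
          rw [span_le, Set.range_subset_iff]
          intro j
          by_cases h1 : (j:ℕ) < k
          · have h2 : (j:ℕ) < k + 1 := by omega
            have h3 : (j:ℕ) ≠ k := by omega
            exact subset_span ⟨j, by simp [h1, h2, h3]⟩
          · by_cases h3 : (j:ℕ) = k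
            · have h2 : (j:ℕ) < k + 1 := by omega
              rw [if_pos h2, if_pos h3]
              have hx : x j ∈ span (Set.range fun j : Fin d =>
                  if (j:ℕ) < k then x j ^ (e j * p) else x j) :=
                subset_span ⟨j, by simp [h1]⟩
              exact Ideal.pow_mem_of_mem _ hx _ (Nat.mul_pos (Nat.succ_pos a) hp.pos)
            · have h2 : ¬ (j:ℕ) < k + 1 := by omega
              exact subset_span ⟨j, by simp [h1, h2]⟩
        have hcB := IH (le_of_lt hkd) e he c (hsub1 hc)
        set g : Fin d → R := fun j : Fin d => if (j:ℕ) < k then x j ^ e j else x j with hgdef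
        have hgK : g K = x K := by simp [hgdef, hKval]
        rw [span_range_split g K, hgK] at hcB
        obtain ⟨z, hz, w, hw, hzw⟩ := Submodule.mem_sup.mp hcB
        obtain ⟨u, rfl⟩ := mem_span_singleton'.mp hw
        -- Frobenius: cᵖ = zᵖ + uᵖ (x K)ᵖ
        haveI := Fact.mk hp
        have hfrob : c ^ p = z ^ p + u ^ p * x K ^ p := by
          rw [← hzw, add_pow_char z (u * x K) p, mul_pow]
        have hzp : z ^ p ∈ span (Set.range fun j : Fin d => if (j:ℕ) < k + 1 then
            x j ^ ((if (j:ℕ) = k then a + 1 else e j) * p) else x j) := by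
          have h1 := pow_mem_span_pow p hp hz
          refine Submodule.span_le.mpr ?_ h1
          rintro _ ⟨_, ⟨j, hjK, rfl⟩, rfl⟩
          have hjk : (j:ℕ) ≠ k := fun h => hjK (Fin.ext h)
          by_cases h1 : (j:ℕ) < k
          · have h2 : (j:ℕ) < k + 1 := by omega
            refine subset_span ⟨j, ?_⟩
            simp only [hgdef, h1, h2, hjk, if_true, if_false]
            rw [← pow_mul]
          · have h2 : ¬ (j:ℕ) < k + 1 := by omega
            simp only [hgdef, h1, if_false]
            have hx : x j ∈ span (Set.range fun j : Fin d => if (j:ℕ) < k + 1 then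
                x j ^ ((if (j:ℕ) = k then a + 1 else e j) * p) else x j) :=
              subset_span ⟨j, by simp [h2]⟩
            exact Ideal.pow_mem_of_mem _ hx p hp.pos
        have hup : u ^ p * x K ^ p ∈ J ⊔ span {x K ^ ((a+1) * p)} := by
          rw [← hsplitA (a+1)]
          have : u ^ p * x K ^ p = c ^ p - z ^ p := by rw [hfrob]; ring
          rw [this]
          exact Submodule.sub_mem _ hc hzp
        have hcolon := colon hreg (Finset.univ.erase K) f hf1 (Finset.notMem_erase K _)
          p ((a+1) * p) (Nat.le_mul_of_pos_left p (Nat.succ_pos a)) (u ^ p) hup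
        have hsubexp : (a+1) * p - p = a * p := by
          have : (a+1) * p = a * p + p := by ring
          omega
        rw [hsubexp, ← hsplitA a] at hcolon
        have hu := iha (u) hcolon
        -- now assemble c = z + u * x K
        have hz2 : z ∈ span (Set.range fun j : Fin d => if (j:ℕ) < k + 1 then
            x j ^ (if (j:ℕ) = k then a + 1 else e j) else x j) := by
          refine Submodule.span_le.mpr ?_ hz
          rintro _ ⟨j, hjK, rfl⟩
          have hjk : (j:ℕ) ≠ k := fun h => hjK (Fin.ext h)
          by_cases h1 : (j:ℕ) < k
          · have h2 : (j:ℕ) < k + 1 := by omega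
            exact subset_span ⟨j, by simp [hgdef, h1, h2, hjk]⟩
          · have h2 : ¬ (j:ℕ) < k + 1 := by omega
            exact subset_span ⟨j, by simp [hgdef, h1, h2]⟩
        have huxK : u * x K ∈ span (Set.range fun j : Fin d => if (j:ℕ) < k + 1 then
            x j ^ (if (j:ℕ) = k then a + 1 else e j) else x j) := by
          have h1 := mul_mem_span_image (y := x K) hu
          refine Submodule.span_le.mpr ?_ h1
          rintro _ ⟨_, ⟨j, -, rfl⟩, rfl⟩
          by_cases h1 : (j:ℕ) < k
          · have h2 : (j:ℕ) < k + 1 := by omega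
            have h3 : (j:ℕ) ≠ k := by omega
            simp only [h1, h2, h3, if_true, if_false]
            exact Ideal.mul_mem_right _ _ (subset_span ⟨j, by simp [h1, h2, h3]⟩)
          · by_cases h3 : (j:ℕ) = k
            · have h2 : (j:ℕ) < k + 1 := by omega
              have hjK : j = K := Fin.ext h3
              subst hjK
              have hv : (if (K:ℕ) < k + 1 then x K ^ (if (K:ℕ) = k then a else e K) else x K)
                  = x K ^ a := by rw [if_pos h2, if_pos h3]
              show (if (K:ℕ) < k + 1 then x K ^ (if (K:ℕ) = k then a else e K) else x K) * x K ∈ _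
              rw [hv, ← pow_succ]
              exact subset_span ⟨K, by simp only [if_pos h2, if_pos h3, if_true, eq_self_iff_true]⟩
            · have h2 : ¬ (j:ℕ) < k + 1 := by omega
              simp only [h1, h2, if_false]
              exact Ideal.mul_mem_right _ _ (subset_span ⟨j, by simp [h1, h2]⟩)
        have : c = z + u * x K := hzw.symm
        rw [this]
        exact Submodule.add_mem _ hz2 huxK
    -- apply the inner claim with a = e K
    have hfinal := inner (e K) (he K) r ?_
    · refine Submodule.span_le.mpr ?_ hfinal
      rw [Set.range_subset_iff]
      intro j
      by_cases h3 : (j:ℕ) = k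
      · have hjK : j = K := Fin.ext h3
        subst hjK
        exact subset_span ⟨K, by simp [hKval, Nat.lt_succ_self]⟩
      · exact subset_span ⟨j, by simp [h3]⟩
    · refine Submodule.span_le.mpr ?_ hr
      rw [Set.range_subset_iff]
      intro j
      by_cases h3 : (j:ℕ) = k
      · have hjK : j = K := Fin.ext h3
        subst hjK
        exact subset_span ⟨K, by simp [hKval, Nat.lt_succ_self]⟩
      · exact subset_span ⟨j, by simp [h3]⟩


lemma stepH (hreg : IsRegular R (List.ofFn x)) (n : ℕ) (hn : 2 ≤ n) :
    ∀ (k : ℕ), k ≤ d → ∀ r : R,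
    (∀ i : Fin d, (i:ℕ) < k → r ∈ span (Set.range fun j : Fin d =>
        if j = i then x j else if (j:ℕ) < k then x j ^ n else x j ^ (n-1))) →
    r ∈ span ({(Finset.univ.filter (fun j : Fin d => (j:ℕ) < k)).prod x} ∪
        Set.range fun j : Fin d => if (j:ℕ) < k then x j ^ n else x j ^ (n-1)) := by
  intro k
  induction k with
  | zero =>
    intro _ r _
    have h1 : (Finset.univ.filter (fun j : Fin d => (j:ℕ) < 0)).prod x = 1 := by
      rw [Finset.filter_false_of_mem (fun j _ => Nat.not_lt_zero _), Finset.prod_empty]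
    have hone : (1:R) ∈ span ({(Finset.univ.filter (fun j : Fin d => (j:ℕ) < 0)).prod x} ∪
        Set.range fun j : Fin d => if (j:ℕ) < 0 then x j ^ n else x j ^ (n-1)) :=
      subset_span (Set.mem_union_left _ (Set.mem_singleton_iff.mpr h1.symm))
    rw [(Ideal.eq_top_iff_one _).mpr hone]
    trivial
  | succ k IHk =>
    intro hk1 r hyp
    have hkd : k < d := lt_of_lt_of_le (Nat.lt_succ_self k) hk1
    set K : Fin d := ⟨k, hkd⟩ with hKdef
    have hKval : ((K : Fin d) : ℕ) = k := rfl
    classical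
    have hKK := hyp K (by rw [hKval]; exact Nat.lt_succ_self k)
    rw [span_range_split (fun j : Fin d =>
        if j = K then x j else if (j:ℕ) < k + 1 then x j ^ n else x j ^ (n-1)) K] at hKK
    rw [if_pos rfl] at hKK
    obtain ⟨z, hz, w, hw, hzw⟩ := Submodule.mem_sup.mp hKK
    obtain ⟨c, rfl⟩ := mem_span_singleton'.mp hw
    -- for each i < k, get c ∈ the (k)-level ideal
    have hyp' : ∀ i : Fin d, (i:ℕ) < k → c ∈ span (Set.range fun j : Fin d =>
        if j = i then x j else if (j:ℕ) < k then x j ^ n else x j ^ (n-1)) := by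
      intro i hik
      have hiK : i ≠ K := fun h => by rw [h] at hik; exact absurd hik (by rw [hKval]; omega)
      have hi1 := hyp i (by omega)
      -- z is in the i-th (k+1)-level ideal
      have hzi : z ∈ span (Set.range fun j : Fin d =>
          if j = i then x j else if (j:ℕ) < k + 1 then x j ^ n else x j ^ (n-1)) := by
        refine Submodule.span_le.mpr ?_ hz
        rintro _ ⟨j, hjK, rfl⟩
        have hjK' : j ≠ K := hjK
        simp only [if_neg hjK']
        by_cases hji : j = i
        · have hj2 : (j:ℕ) < k + 1 := by rw [hji]; omega
          rw [if_pos hj2]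
          have hgen : x j ∈ span (Set.range fun j : Fin d =>
              if j = i then x j else if (j:ℕ) < k + 1 then x j ^ n else x j ^ (n-1)) :=
            subset_span ⟨j, by simp [hji]⟩
          exact Ideal.pow_mem_of_mem _ hgen n (by omega)
        · exact subset_span ⟨j, by simp [hji]⟩
      have hcxK : c * x K ∈ span (Set.range fun j : Fin d =>
          if j = i then x j else if (j:ℕ) < k + 1 then x j ^ n else x j ^ (n-1)) := by
        have : c * x K = r - z := by rw [← hzw]; ring
        rw [this]
        exact Submodule.sub_mem _ hi1 hzi
      -- split the i-th ideal at K and apply the colon lemma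
      set fi : Fin d → ℕ := fun j => if j = i then 1 else if (j:ℕ) < k + 1 then n else n - 1
        with hfidef
      have hfi1 : ∀ j ∈ Finset.univ.erase K, 1 ≤ fi j := by
        intro j _
        by_cases hji : j = i
        · simp [hfidef, hji]
        · by_cases hj1 : (j:ℕ) < k + 1 <;> simp only [hfidef, if_neg hji, hj1, if_true, if_false, ↓reduceIte] <;> omega
      have hsplit : span (Set.range fun j : Fin d =>
          if j = i then x j else if (j:ℕ) < k + 1 then x j ^ n else x j ^ (n-1))
          = span ((fun j => x j ^ fi j) '' ↑(Finset.univ.erase K)) ⊔ span {x K ^ n} := by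
        rw [span_range_split (fun j : Fin d =>
          if j = i then x j else if (j:ℕ) < k + 1 then x j ^ n else x j ^ (n-1)) K]
        congr 2
        · rw [coe_erase_univ]
          refine Set.image_congr fun j hj => ?_
          have hjK : j ≠ K := hj
          simp only [hfidef]
          by_cases hji : j = i
          · simp [hji]
          · by_cases hj1 : (j:ℕ) < k + 1
            · simp [hji, hj1]
            · simp [hji, hj1]
        · rw [if_neg (Ne.symm hiK), if_pos (by rw [hKval]; exact Nat.lt_succ_self k)]
      rw [hsplit] at hcxK
      have hcolon := colon hreg (Finset.univ.erase K) fi hfi1 (Finset.notMem_erase K _)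
        1 n (by omega) c (by rwa [pow_one])
      -- identify the result with the k-level ideal for i
      have hsplit2 : span (Set.range fun j : Fin d =>
          if j = i then x j else if (j:ℕ) < k then x j ^ n else x j ^ (n-1))
          = span ((fun j => x j ^ fi j) '' ↑(Finset.univ.erase K)) ⊔ span {x K ^ (n-1)} := by
        rw [span_range_split (fun j : Fin d =>
          if j = i then x j else if (j:ℕ) < k then x j ^ n else x j ^ (n-1)) K]
        congr 2
        · rw [coe_erase_univ]
          refine Set.image_congr fun j hj => ?_
          have hjK : j ≠ K := hj
          have hjk : (j:ℕ) ≠ k := fun h => hjK (Fin.ext h)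
          simp only [hfidef]
          by_cases hji : j = i
          · simp [hji]
          · by_cases hj1 : (j:ℕ) < k
            · have h2 : (j:ℕ) < k + 1 := by omega
              simp [hji, hj1, h2]
            · have h2 : ¬ (j:ℕ) < k + 1 := by omega
              simp [hji, hj1, h2]
        · rw [if_neg (Ne.symm hiK), if_neg (by rw [hKval]; omega)]
      rw [hsplit2]
      exact hcolon
    have hc := IHk (by omega) c hyp'
    -- assemble: r = z + c * x K
    have hz2 : z ∈ span ({(Finset.univ.filter (fun j : Fin d => (j:ℕ) < k + 1)).prod x} ∪
        Set.range fun j : Fin d => if (j:ℕ) < k + 1 then x j ^ n else x j ^ (n-1)) := by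
      refine Submodule.span_le.mpr ?_ hz
      rintro _ ⟨j, hjK, rfl⟩
      have hjK' : (j : Fin d) ≠ K := hjK
      simp only [if_neg hjK']
      exact subset_span (Set.mem_union_right _ ⟨j, rfl⟩)
    have hfilter : Finset.univ.filter (fun j : Fin d => (j:ℕ) < k + 1)
        = insert K (Finset.univ.filter (fun j : Fin d => (j:ℕ) < k)) := by
      ext j
      simp only [Finset.mem_filter, Finset.mem_insert, Finset.mem_univ, true_and]
      constructor
      · intro hj
        by_cases hjk : (j:ℕ) = k
        · exact Or.inl (Fin.ext hjk)
        · exact Or.inr (by omega)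
      · rintro (rfl | hj)
        · rw [hKval]; exact Nat.lt_succ_self k
        · omega
    have hprod : (Finset.univ.filter (fun j : Fin d => (j:ℕ) < k)).prod x * x K
        = (Finset.univ.filter (fun j : Fin d => (j:ℕ) < k + 1)).prod x := by
      rw [hfilter, Finset.prod_insert (by simp [hKval])]
      ring
    have hcxK2 : c * x K ∈ span
        ({(Finset.univ.filter (fun j : Fin d => (j:ℕ) < k + 1)).prod x} ∪
        Set.range fun j : Fin d => if (j:ℕ) < k + 1 then x j ^ n else x j ^ (n-1)) := by
      have h1 := mul_mem_span_image (y := x K) hc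
      refine Submodule.span_le.mpr ?_ h1
      rintro _ ⟨y, hy, rfl⟩
      rcases hy with hy | ⟨j, rfl⟩
      · rw [Set.mem_singleton_iff] at hy
        subst hy
        show (Finset.univ.filter (fun j : Fin d => (j:ℕ) < k)).prod x * x K ∈ _
        rw [hprod]
        exact subset_span (Set.mem_union_left _ rfl)
      · show (if (j:ℕ) < k then x j ^ n else x j ^ (n-1)) * x K ∈ _
        by_cases hj1 : (j:ℕ) < k
        · rw [if_pos hj1]
          refine Ideal.mul_mem_right _ _ (subset_span (Set.mem_union_right _ ⟨j, ?_⟩))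
          have h2 : (j:ℕ) < k + 1 := by omega
          simp only [if_pos h2]
        · rw [if_neg hj1]
          by_cases hjk : (j:ℕ) = k
          · have hjK : j = K := Fin.ext hjk
            subst hjK
            rw [← pow_succ, (by omega : n - 1 + 1 = n)]
            refine subset_span (Set.mem_union_right _ ⟨K, ?_⟩)
            have h2 : (K:ℕ) < k + 1 := by rw [hKval]; omega
            simp only [if_pos h2]
          · have h2 : ¬ (j:ℕ) < k + 1 := by omega
            refine Ideal.mul_mem_right _ _ (subset_span (Set.mem_union_right _ ⟨j, ?_⟩))
            simp only [if_neg h2]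
    have : r = z + c * x K := hzw.symm
    rw [this]
    exact Submodule.add_mem _ hz2 hcxK2

end FrobeniusAux



/-- Let `(R, 𝔪)` be a regular local ring of characteristic `p > 0` with regular
system of parameters `x₁, …, x_d` (`d ≥ 1`), encoded as: `R` is a Noetherian local ring and
`x₁, …, x_d` is a regular sequence generating the maximal ideal. If `r ∈ R` satisfies
`r^p ∈ (x₁^{np}, …, x_{i-1}^{np}, xᵢ^p, x_{i+1}^{np}, …, x_d^{np})` for every `1 ≤ i ≤ d`
(where `n ≥ 2`), then `r ∈ (x₁ ⋯ x_d, x₁ⁿ, …, x_dⁿ)`. -/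
theorem mem_product_ideal_of_frobenius_conditions (R : Type*) [CommRing R]
    [IsNoetherianRing R] [IsLocalRing R] (p : ℕ) (hp : p.Prime) [CharP R p]
    (d : ℕ) (hd : 1 ≤ d) (x : Fin d → R)
    (hreg : RingTheory.Sequence.IsRegular R (List.ofFn x))
    (hmax : Ideal.span (Set.range x) = IsLocalRing.maximalIdeal R)
    (n : ℕ) (hn : 2 ≤ n) (r : R)
    (h : ∀ i : Fin d,
      r ^ p ∈ Ideal.span (Set.range fun j => x j ^ (if j = i then p else n * p))) :
    r ∈ Ideal.span ({∏ j, x j} ∪ Set.range fun j => x j ^ n) := by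
  classical
  have hyp : ∀ i : Fin d, (i:ℕ) < d → r ∈ Ideal.span (Set.range fun j : Fin d =>
      if j = i then x j else if (j:ℕ) < d then x j ^ n else x j ^ (n-1)) := by
    intro i _
    have he : ∀ j : Fin d, 1 ≤ (if j = i then 1 else n) := fun j => by
      by_cases hji : j = i <;> simp [hji] <;> omega
    have hhyp : r ^ p ∈ Ideal.span (Set.range fun j : Fin d =>
        if (j:ℕ) < d then x j ^ ((if j = i then 1 else n) * p) else x j) := by
      have hfun : (fun j : Fin d => x j ^ (if j = i then p else n * p))
          = fun j : Fin d => if (j:ℕ) < d then x j ^ ((if j = i then 1 else n) * p) else x j := by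
        funext j
        rw [if_pos j.isLt]
        by_cases hji : j = i <;> simp [hji, one_mul]
      rw [← hfun]
      exact h i
    have hcon := FrobeniusAux.stepG hreg hmax p hp d le_rfl _ he r hhyp
    have hfun2 : (fun j : Fin d => if (j:ℕ) < d then x j ^ (if j = i then 1 else n) else x j)
        = fun j : Fin d => if j = i then x j else if (j:ℕ) < d then x j ^ n else x j ^ (n-1) := by
      funext j
      rw [if_pos j.isLt]
      by_cases hji : j = i <;> simp [hji, j.isLt]
    rw [hfun2] at hcon
    exact hcon
  have hfin := FrobeniusAux.stepH hreg n hn d le_rfl r hyp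
  have hfilter : Finset.univ.filter (fun j : Fin d => (j:ℕ) < d) = Finset.univ := by
    apply Finset.filter_true_of_mem; intro j _; exact j.isLt
  have hfun3 : (fun j : Fin d => if (j:ℕ) < d then x j ^ n else x j ^ (n-1))
      = fun j : Fin d => x j ^ n := by
    funext j; rw [if_pos j.isLt]
  rw [hfilter, hfun3] at hfin
  exact hfin
end

section
/- Let $k$ be an infinite field of characteristic $p$ and $R = k[t]_{(t)}$ the localization of $k[t]$ at the prime ideal $(t)$. For distinct nonzero $a, b \in k$, there is no element $f \in R$ with $\frac{1}{t-a} - \frac{1}{t-b} = f^p - f$. Consequently the quotient group $R / \{f^p - f : f \in R\}$ is infinite. -/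
open Polynomial

lemma key_coprime {k : Type*} [Field k] {p : ℕ} (hp2 : 2 ≤ p) {a b : k} (hab : a ≠ b)
    {u s : k[X]} (hs : s ≠ 0) (hcop : IsCoprime u s)
    (h : (X - C a) * (X - C b) * (u ^ p - u * s ^ (p - 1)) = C (a - b) * s ^ p) : False := by
  set q : k[X] := (X - C a) * (X - C b) with hq
  have hqsf : Squarefree q := (separable_X_sub_C.mul separable_X_sub_C
    (isCoprime_X_sub_C_of_isUnit_sub (sub_ne_zero_of_ne hab).isUnit)).squarefree
  have hco : IsCoprime (s ^ p) (u ^ p - u * s ^ (p - 1)) := by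
    have h1 : IsCoprime s (u ^ p - u * s ^ (p - 1)) := by
      have h2 : u ^ p - u * s ^ (p - 1) = u ^ p + (-(u * s ^ (p - 2))) * s := by
        have h3 : p - 2 + 1 = p - 1 := by omega
        rw [← h3, pow_succ]; ring
      rw [h2]
      exact (hcop.symm.pow_right).add_mul_right_right _
    exact h1.pow_left
  have hdvd : s ^ p ∣ q := hco.dvd_of_dvd_mul_right ⟨C (a - b), by rw [h]; ring⟩
  have hs2 : s * s ∣ q := by
    have : s ^ 2 ∣ q := dvd_trans (pow_dvd_pow s hp2) hdvd
    rwa [sq] at this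
  have hu : IsUnit s := hqsf s hs2
  -- s is a nonzero constant
  obtain ⟨c, hc, rfl⟩ : ∃ c : k, c ≠ 0 ∧ s = C c := by
    rw [Polynomial.isUnit_iff] at hu
    obtain ⟨c, hcu, hcs⟩ := hu
    exact ⟨c, hcu.ne_zero, hcs.symm⟩
  -- degree contradiction
  have hrhs : C (a - b) * C c ^ p ≠ 0 := by
    apply mul_ne_zero
    · simpa [sub_eq_zero] using hab
    · exact pow_ne_zero _ (by simpa using hc)
  have hg : u ^ p - u * C c ^ (p - 1) ≠ 0 := by
    intro h0
    rw [h0, mul_zero] at h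
    exact hrhs h.symm
  have hq0 : q ≠ 0 := mul_ne_zero (X_sub_C_ne_zero a) (X_sub_C_ne_zero b)
  have hdeg := congrArg natDegree h
  rw [natDegree_mul hq0 hg] at hdeg
  have h2 : q.natDegree = 2 := by
    rw [hq, natDegree_mul (X_sub_C_ne_zero a) (X_sub_C_ne_zero b),
      natDegree_X_sub_C, natDegree_X_sub_C]
  rw [h2] at hdeg
  have : (C (a - b) * C c ^ p).natDegree = 0 := by
    rw [← map_pow, ← map_mul, natDegree_C]
  omega

lemma key_poly {k : Type*} [Field k] {p : ℕ} (hp2 : 2 ≤ p) {a b : k} (hab : a ≠ b)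
    {u s : k[X]} (hs : s ≠ 0)
    (h : (X - C a) * (X - C b) * (u ^ p - u * s ^ (p - 1)) = C (a - b) * s ^ p) : False := by
  classical
  set d : k[X] := GCDMonoid.gcd u s with hd
  have hd0 : d ≠ 0 := gcd_ne_zero_of_right hs
  set u' : k[X] := u / d with hu'
  set s' : k[X] := s / d with hs'
  have hcop : IsCoprime u' s' := isCoprime_div_gcd_div_gcd hs
  have hu : u = d * u' := (EuclideanDomain.mul_div_cancel' hd0 (gcd_dvd_left u s)).symm
  have hsu : s = d * s' := (EuclideanDomain.mul_div_cancel' hd0 (gcd_dvd_right u s)).symm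
  have hs'0 : s' ≠ 0 := by
    intro h0
    rw [h0, mul_zero] at hsu
    exact hs hsu
  have hpow : d * d ^ (p - 1) = d ^ p := by
    rw [← pow_succ']
    congr 1
    omega
  have h2 : (X - C a) * (X - C b) * ((d * u') ^ p - (d * u') * ((d * s') ^ (p - 1)))
      = C (a - b) * (d * s') ^ p := by rw [← hu, ← hsu]; exact h
  rw [mul_pow, mul_pow, mul_pow, ← hpow] at h2
  apply key_coprime hp2 hab hs'0 hcop (u := u')
  apply mul_left_cancel₀ (mul_ne_zero hd0 (pow_ne_zero (p-1) hd0) : d * d ^ (p-1) ≠ 0)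
  
  linear_combination h2


lemma mem_primeCompl_of_ne {k : Type*} [Field k] {P : Ideal (Polynomial k)}
    (hP : P = Ideal.span {Polynomial.X}) [P.IsPrime] {a : k} (ha : a ≠ 0) :
    X - C a ∈ P.primeCompl := by
  intro hmem
  rw [hP, SetLike.mem_coe, Ideal.mem_span_singleton] at hmem
  have h1 : (X : k[X]) ∣ C a := (dvd_sub_right dvd_rfl).mp (by simpa using hmem)
  have h2 : (C a : k[X]).eval 0 = 0 := by
    obtain ⟨c, hc⟩ := h1
    rw [hc]
    simp
  simp at h2
  exact ha h2

lemma part1 {k : Type*} [Field k] {p : ℕ} (hp : p.Prime) {P : Ideal (Polynomial k)}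
    (hP : P = Ideal.span {Polynomial.X}) [P.IsPrime] {a b : k}
    (ha : a ≠ 0) (hb : b ≠ 0) (hab : a ≠ b) :
    ¬∃ f : Localization.AtPrime P,
        Ring.inverse (algebraMap (Polynomial k) (Localization.AtPrime P) (X - C a)) -
          Ring.inverse (algebraMap (Polynomial k) (Localization.AtPrime P) (X - C b))
          = f ^ p - f := by
  set R := Localization.AtPrime P with hR
  set ψ := algebraMap (Polynomial k) R with hψ
  rintro ⟨f, hf⟩
  have hle : P.primeCompl ≤ nonZeroDivisors (Polynomial k) := by
    intro x hx
    exact mem_nonZeroDivisors_of_ne_zero (fun h0 => hx (h0 ▸ P.zero_mem))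
  have hinj : Function.Injective ψ := IsLocalization.injective R hle
  obtain ⟨⟨u, s⟩, hfeq⟩ := IsLocalization.mk'_surjective P.primeCompl f
  have hs0 : (s : k[X]) ≠ 0 := fun h0 => s.2 (h0 ▸ P.zero_mem)
  have hfs : f * ψ s = ψ u := by rw [← hfeq]; exact IsLocalization.mk'_spec R u s
  have hA : Ring.inverse (ψ (X - C a)) * ψ (X - C a) = 1 :=
    Ring.inverse_mul_cancel _ (IsLocalization.map_units R ⟨X - C a, mem_primeCompl_of_ne hP ha⟩)
  have hB : Ring.inverse (ψ (X - C b)) * ψ (X - C b) = 1 :=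
    Ring.inverse_mul_cancel _ (IsLocalization.map_units R ⟨X - C b, mem_primeCompl_of_ne hP hb⟩)
  have hp2 := hp.two_le
  apply key_poly hp2 hab hs0 (u := u)
  apply hinj
  have hpow : ψ s * ψ s ^ (p - 1) = ψ s ^ p := by
    rw [← pow_succ']
    congr 1
    omega
  have hC : ψ (X - C b) - ψ (X - C a) = ψ (C (a - b)) := by
    rw [← map_sub]
    congr 1
    rw [map_sub]
    ring
  have expand1 : ψ ((X - C a) * (X - C b) * (u ^ p - u * (s : k[X]) ^ (p - 1)))
      = ψ (X - C a) * ψ (X - C b) * (ψ u ^ p - ψ u * ψ (s : k[X]) ^ (p - 1)) := by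
    rw [map_mul, map_mul, map_sub ψ (u ^ p), map_pow, map_mul, map_pow]
  have expand2 : ψ (C (a - b) * (s : k[X]) ^ p) = ψ (C (a - b)) * ψ (s : k[X]) ^ p := by
    rw [map_mul, map_pow]
  rw [expand1, expand2]
  calc ψ (X - C a) * ψ (X - C b) * (ψ u ^ p - ψ u * ψ (s : k[X]) ^ (p - 1))
      = ψ (X - C a) * ψ (X - C b) * ((f * ψ s) ^ p - (f * ψ s) * ψ s ^ (p - 1)) := by rw [hfs]
    _ = (f ^ p - f) * (ψ (X - C a) * ψ (X - C b)) * ψ s ^ p := by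
        rw [mul_pow, ← hpow]; ring
    _ = (Ring.inverse (ψ (X - C a)) - Ring.inverse (ψ (X - C b)))
          * (ψ (X - C a) * ψ (X - C b)) * ψ s ^ p := by rw [hf]
    _ = (ψ (X - C b) - ψ (X - C a)) * ψ s ^ p := by
        rw [sub_mul, sub_mul,
          show Ring.inverse (ψ (X - C a)) * (ψ (X - C a) * ψ (X - C b))
            = Ring.inverse (ψ (X - C a)) * ψ (X - C a) * ψ (X - C b) by ring, hA,
          show Ring.inverse (ψ (X - C b)) * (ψ (X - C a) * ψ (X - C b))
            = Ring.inverse (ψ (X - C b)) * ψ (X - C b) * ψ (X - C a) by ring, hB]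
        ring
    _ = ψ (C (a - b)) * ψ (s : k[X]) ^ p := by rw [hC]

/-- Let `k` be an infinite field of characteristic `p` and `R = k[t]_{(t)}`
the localization of `k[t]` at the prime ideal `(t)`. For distinct nonzero `a, b ∈ k` there is
no `f ∈ R` with `1/(t-a) - 1/(t-b) = f^p - f` (both `t - a` and `t - b` are units of `R`, and
`1/(t-a)` denotes `Ring.inverse` of the image of `t - a`). Consequently the quotient of the
additive group `R` by the subgroup `{f^p - f : f ∈ R}` is infinite. -/
theorem no_artinSchreier_solution_localization (k : Type*) [Field k] [Infinite k]
    (p : ℕ) (hp : p.Prime) [CharP k p]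
    (P : Ideal (Polynomial k)) (hP : P = Ideal.span {Polynomial.X}) [P.IsPrime] :
    (∀ a b : k, a ≠ 0 → b ≠ 0 → a ≠ b →
      ¬∃ f : Localization.AtPrime P,
        Ring.inverse (algebraMap (Polynomial k) (Localization.AtPrime P)
            (Polynomial.X - Polynomial.C a)) -
          Ring.inverse (algebraMap (Polynomial k) (Localization.AtPrime P)
            (Polynomial.X - Polynomial.C b)) = f ^ p - f) ∧
    Infinite ((Localization.AtPrime P) ⧸
      AddSubgroup.closure (Set.range fun f : Localization.AtPrime P => f ^ p - f)) := by
  refine ⟨fun a b ha hb hab => part1 hp hP ha hb hab, ?_⟩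
  set R := Localization.AtPrime P with hR
  have hle : P.primeCompl ≤ nonZeroDivisors (Polynomial k) := by
    intro x hx
    exact mem_nonZeroDivisors_of_ne_zero (fun h0 => hx (h0 ▸ P.zero_mem))
  have hinj : Function.Injective (algebraMap (Polynomial k) R) := IsLocalization.injective R hle
  haveI : CharP R p := charP_of_injective_ringHom hinj p
  haveI : ExpChar R p := ExpChar.prime hp
  set φ : R →+ R := (frobenius R p).toAddMonoidHom - (AddMonoidHom.id R) with hφ
  have hφapp : ∀ f : R, φ f = f ^ p - f := fun f => by
    simp [hφ, frobenius_def]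
  have hcl : AddSubgroup.closure (Set.range fun f : R => f ^ p - f) = φ.range := by
    have : (Set.range fun f : R => f ^ p - f) = (φ.range : Set R) := by
      ext x
      simp [hφapp, eq_comm]
    rw [this, AddSubgroup.closure_eq]
  -- the injection
  have key : Function.Injective (fun a : {x : k // x ≠ 0} =>
      (QuotientAddGroup.mk (Ring.inverse (algebraMap (Polynomial k) R
        (Polynomial.X - Polynomial.C (a : k)))) :
        R ⧸ AddSubgroup.closure (Set.range fun f : R => f ^ p - f))) := by
    intro a b hquot
    by_contra hne
    have hab : (a : k) ≠ (b : k) := fun h => hne (Subtype.ext h)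
    rw [QuotientAddGroup.eq] at hquot
    rw [hcl] at hquot
    obtain ⟨f, hfval⟩ := hquot
    refine part1 hp hP b.2 a.2 (Ne.symm hab) ⟨f, ?_⟩
    rw [hφapp] at hfval
    rw [hfval]
    ring
  haveI : Infinite {x : k // x ≠ 0} := by
    have h1 : (({0} : Set k)ᶜ).Infinite :=
      Set.Finite.infinite_compl (Set.finite_singleton 0)
    haveI h2 := h1.to_subtype
    exact Infinite.of_injective (fun x : ↥(({0} : Set k)ᶜ) =>
      (⟨x.1, fun h => x.2 (by simp [h])⟩ : {x : k // x ≠ 0}))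
      (fun x y hxy => Subtype.ext (congrArg Subtype.val hxy))
  exact Infinite.of_injective _ key
end
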